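/- For all real parameters a and all w, θ ∈ ℝ, the quantity r_θ := √2·w·∫_ℝ R(U(z)) dz + 4θ·∫_0^{+∞} z·R(U(z)) dz equals w√2·(1/2 − a) + 2θ·( −1/2 − (2a−1)·log 2 ). -/

import Mathlib

open Real MeasureTheory

/-- The bistable reaction term `R(u) = u(1-u)(u-a)`. -/
noncomputable def R (a u : ℝ) : ℝ := u * (1 - u) * (u - a)

/-- The kink profile `U(z) = 1/(1+exp z)`. -/
noncomputable def U (z : ℝ) : ℝ := 1 / (1 + Real.exp z)

noncomputable def Gaux (a z : ℝ) : ℝ := a * U z - (U z) ^ 2 / 2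

noncomputable def Haux (a z : ℝ) : ℝ :=
  z * Gaux a z + a * Real.log (1 + Real.exp (-z))
    + (-Real.log (1 + Real.exp (-z)) + U z) / 2

lemma one_add_exp_pos (z : ℝ) : 0 < 1 + Real.exp z := by positivity

lemma U_pos (z : ℝ) : 0 < U z := by
  unfold U; positivity

lemma U_lt_one (z : ℝ) : U z < 1 := by
  unfold U
  rw [div_lt_one (one_add_exp_pos z)]
  linarith [Real.exp_pos z]

lemma hasDerivAt_U (z : ℝ) : HasDerivAt U (-(U z * (1 - U z))) z := by
  have h : HasDerivAt (fun z => 1 + Real.exp z) (Real.exp z) z :=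
    (Real.hasDerivAt_exp z).const_add 1
  have hne := ne_of_gt (one_add_exp_pos z)
  have h2 := h.inv hne
  have hfun : (fun y : ℝ => (1 + Real.exp y)⁻¹) = U := by
    funext y; simp [U, one_div]
  rw [show (fun z : ℝ => 1 + Real.exp z)⁻¹ = U from hfun] at h2
  have heq : -Real.exp z / (1 + Real.exp z) ^ 2 = -(U z * (1 - U z)) := by
    unfold U
    field_simp
    ring
  rwa [heq] at h2

lemma hasDerivAt_Gaux (a z : ℝ) : HasDerivAt (Gaux a) (R a (U z)) z := by
  have h := ((hasDerivAt_U z).const_mul a).sub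
    (((hasDerivAt_U z).pow 2).div_const 2)
  refine h.congr_deriv ?_
  unfold R
  push_cast
  ring

lemma hasDerivAt_log_one_add_exp_neg (z : ℝ) :
    HasDerivAt (fun z => Real.log (1 + Real.exp (-z))) (-(U z)) z := by
  have h0 : HasDerivAt (fun z : ℝ => Real.exp (-z)) (-Real.exp (-z)) z := by
    simpa [Function.comp_def] using (Real.hasDerivAt_exp (-z)).comp z (hasDerivAt_neg z)
  have h1 : HasDerivAt (fun z : ℝ => 1 + Real.exp (-z)) (-Real.exp (-z)) z :=
    h0.const_add 1
  have h2 := h1.log (ne_of_gt (one_add_exp_pos (-z)))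
  convert h2 using 1
  unfold U
  rw [Real.exp_neg]
  have hne := (Real.exp_pos z).ne'
  field_simp
  ring

lemma hasDerivAt_Haux (a z : ℝ) : HasDerivAt (Haux a) (z * R a (U z)) z := by
  have h1 := (hasDerivAt_id z).mul (hasDerivAt_Gaux a z)
  have h2 := (hasDerivAt_log_one_add_exp_neg z).const_mul a
  have h3 := (((hasDerivAt_log_one_add_exp_neg z).neg).add (hasDerivAt_U z)).div_const 2
  have h := (h1.add h2).add h3
  refine h.congr_deriv ?_
  simp only [id_eq]
  unfold Gaux R
  ring

lemma tendsto_U_atTop : Filter.Tendsto U Filter.atTop (nhds 0) := by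
  have h : Filter.Tendsto (fun z => 1 + Real.exp z) Filter.atTop Filter.atTop :=
    Filter.tendsto_atTop_add_const_left _ 1 Real.tendsto_exp_atTop
  have h2 := h.inv_tendsto_atTop
  have hfun : (fun y : ℝ => (1 + Real.exp y)⁻¹) = U := by
    funext y; simp [U, one_div]
  rw [show (fun z : ℝ => 1 + Real.exp z)⁻¹ = U from hfun] at h2
  exact h2

lemma tendsto_U_atBot : Filter.Tendsto U Filter.atBot (nhds 1) := by
  have h : Filter.Tendsto (fun z => 1 + Real.exp z) Filter.atBot (nhds 1) := by
    simpa using (tendsto_const_nhds (x := (1:ℝ))).add Real.tendsto_exp_atBot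
  have h2 := h.inv₀ (by norm_num)
  have hfun : (fun y : ℝ => (1 + Real.exp y)⁻¹) = U := by
    funext y; simp [U, one_div]
  rw [hfun] at h2
  simpa using h2

lemma tendsto_Gaux_atTop (a : ℝ) : Filter.Tendsto (Gaux a) Filter.atTop (nhds 0) := by
  have hc : Continuous (fun u : ℝ => a * u - u ^ 2 / 2) := by continuity
  have := (hc.tendsto 0).comp tendsto_U_atTop
  unfold Gaux
  simpa [Function.comp_def] using this

lemma tendsto_Gaux_atBot (a : ℝ) : Filter.Tendsto (Gaux a) Filter.atBot (nhds (a - 1/2)) := by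
  have hc : Continuous (fun u : ℝ => a * u - u ^ 2 / 2) := by continuity
  have := (hc.tendsto 1).comp tendsto_U_atBot
  have h2 : a * 1 - 1 ^ 2 / 2 = a - 1/2 := by norm_num
  unfold Gaux
  simpa [Function.comp_def, h2] using this

lemma tendsto_exp_neg_atTop : Filter.Tendsto (fun z : ℝ => Real.exp (-z)) Filter.atTop (nhds 0) :=
  Real.tendsto_exp_atBot.comp Filter.tendsto_neg_atTop_atBot

lemma tendsto_mul_U_atTop : Filter.Tendsto (fun z => z * U z) Filter.atTop (nhds 0) := by
  have h1 : Filter.Tendsto (fun z : ℝ => z * Real.exp (-z)) Filter.atTop (nhds 0) := by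
    simpa using Real.tendsto_pow_mul_exp_neg_atTop_nhds_zero 1
  have h2 : Filter.Tendsto (fun z => (z * Real.exp (-z)) * (1 - U z)) Filter.atTop
      (nhds (0 * (1 - 0))) := h1.mul (tendsto_const_nhds.sub tendsto_U_atTop)
  have heq : ∀ z : ℝ, (z * Real.exp (-z)) * (1 - U z) = z * U z := by
    intro z
    have hne := ne_of_gt (one_add_exp_pos z)
    have he := (Real.exp_pos z).ne'
    unfold U
    rw [Real.exp_neg]
    field_simp
    ring
  have h3 := h2.congr heq
  simpa using h3

lemma tendsto_log_one_add_exp_neg_atTop :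
    Filter.Tendsto (fun z : ℝ => Real.log (1 + Real.exp (-z))) Filter.atTop (nhds 0) := by
  have h : Filter.Tendsto (fun z : ℝ => 1 + Real.exp (-z)) Filter.atTop (nhds 1) := by
    simpa using (tendsto_const_nhds (x := (1:ℝ))).add tendsto_exp_neg_atTop
  have hlog := (Real.continuousAt_log (by norm_num : (1:ℝ) ≠ 0)).tendsto.comp h
  simpa [Function.comp_def] using hlog

lemma tendsto_Haux_atTop (a : ℝ) : Filter.Tendsto (Haux a) Filter.atTop (nhds 0) := by
  have h1 : Filter.Tendsto (fun z => z * Gaux a z) Filter.atTop (nhds 0) := by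
    have h := (tendsto_mul_U_atTop.const_mul a).sub
      ((tendsto_mul_U_atTop.mul tendsto_U_atTop).div_const 2)
    have heq : ∀ z : ℝ, a * (z * U z) - (z * U z) * U z / 2 = z * Gaux a z := by
      intro z; unfold Gaux; ring
    have := h.congr heq
    simpa using this
  have h2 := tendsto_log_one_add_exp_neg_atTop.const_mul a
  have h3 := ((tendsto_log_one_add_exp_neg_atTop.neg).add tendsto_U_atTop).div_const 2
  have h := (h1.add h2).add h3
  unfold Haux
  simpa using h

lemma continuous_RU (a : ℝ) : Continuous (fun z => R a (U z)) := by
  have hU : Continuous U :=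
    continuous_const.div (by continuity) (fun z => ne_of_gt (one_add_exp_pos z))
  have hR : Continuous (fun u : ℝ => u * (1 - u) * (u - a)) := by continuity
  exact hR.comp hU

lemma RU_bound (a z : ℝ) : ‖R a (U z)‖ ≤ (1 + |a|) * (U z * (1 - U z)) := by
  have h0 := U_pos z
  have h1 := U_lt_one z
  rw [Real.norm_eq_abs]
  unfold R
  rw [abs_mul, abs_mul, abs_of_pos h0, abs_of_pos (by linarith : (0:ℝ) < 1 - U z)]
  have h2 : |U z - a| ≤ 1 + |a| := by
    calc |U z - a| ≤ |U z| + |a| := abs_sub _ _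
    _ ≤ 1 + |a| := by rw [abs_of_pos h0]; linarith
  nlinarith [abs_nonneg a, mul_pos h0 (by linarith : (0:ℝ) < 1 - U z)]

lemma UU_eq (z : ℝ) : U z * (1 - U z) = Real.exp z / (1 + Real.exp z) ^ 2 := by
  have hne := ne_of_gt (one_add_exp_pos z)
  unfold U
  field_simp
  ring

lemma integrableOn_RU_Iic (a : ℝ) : IntegrableOn (fun z => R a (U z)) (Set.Iic 0) := by
  apply Integrable.mono' ((integrableOn_exp_Iic 0).const_mul (1 + |a|))
    (continuous_RU a).aestronglyMeasurable
  filter_upwards with z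
  refine le_trans (RU_bound a z) ?_
  have h : U z * (1 - U z) ≤ Real.exp z := by
    rw [UU_eq]
    rw [div_le_iff₀ (by positivity)]
    have h1 : (1:ℝ) ≤ (1 + Real.exp z) ^ 2 := by nlinarith [Real.exp_pos z]
    nlinarith [mul_le_mul_of_nonneg_left h1 (Real.exp_pos z).le]
  have ha : (0:ℝ) ≤ 1 + |a| := by positivity
  exact mul_le_mul_of_nonneg_left h ha

lemma UU_le_exp_neg (z : ℝ) : U z * (1 - U z) ≤ Real.exp (-z) := by
  rw [UU_eq, Real.exp_neg]
  rw [div_le_iff₀ (by positivity)]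
  rw [inv_mul_eq_div, le_div_iff₀ (Real.exp_pos z)]
  nlinarith [Real.exp_pos z]

lemma integrableOn_RU_Ioi (a : ℝ) : IntegrableOn (fun z => R a (U z)) (Set.Ioi 0) := by
  apply Integrable.mono' ((exp_neg_integrableOn_Ioi 0 one_pos).const_mul (1 + |a|))
    (continuous_RU a).aestronglyMeasurable
  filter_upwards with z
  refine le_trans (RU_bound a z) ?_
  have h := UU_le_exp_neg z
  have ha : (0:ℝ) ≤ 1 + |a| := by positivity
  calc (1 + |a|) * (U z * (1 - U z)) ≤ (1 + |a|) * Real.exp (-z) :=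
        mul_le_mul_of_nonneg_left h ha
  _ = (1 + |a|) * Real.exp (-1 * z) := by norm_num

lemma integrable_RU (a : ℝ) : Integrable (fun z => R a (U z)) := by
  rw [← integrableOn_univ, ← Set.Iic_union_Ioi (a := (0:ℝ))]
  exact (integrableOn_RU_Iic a).union (integrableOn_RU_Ioi a)

lemma integrableOn_mul_exp_neg : IntegrableOn (fun x : ℝ => Real.exp (-x) * x) (Set.Ioi 0) := by
  have h := Real.GammaIntegral_convergent (by norm_num : (0:ℝ) < 2)
  simp only [show (2:ℝ) - 1 = 1 by norm_num, Real.rpow_one] at h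
  exact h

lemma integrableOn_zRU_Ioi (a : ℝ) :
    IntegrableOn (fun z => z * R a (U z)) (Set.Ioi 0) := by
  apply Integrable.mono' (integrableOn_mul_exp_neg.const_mul (1 + |a|))
    (continuous_id.mul (continuous_RU a)).aestronglyMeasurable
  filter_upwards [ae_restrict_mem measurableSet_Ioi] with z hz
  have hz0 : (0:ℝ) < z := hz
  simp only [Pi.mul_apply, id_eq]
  rw [norm_mul, Real.norm_eq_abs (r := z), abs_of_pos hz0]
  have h1 := RU_bound a z
  have h2 := UU_le_exp_neg z
  have ha : (0:ℝ) ≤ 1 + |a| := by positivity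
  have hstep : ‖R a (U z)‖ ≤ (1 + |a|) * Real.exp (-z) :=
    le_trans h1 (mul_le_mul_of_nonneg_left h2 ha)
  calc z * ‖R a (U z)‖ ≤ z * ((1 + |a|) * Real.exp (-z)) :=
        mul_le_mul_of_nonneg_left hstep hz0.le
  _ = (1 + |a|) * (Real.exp (-z) * z) := by ring

lemma integral_RU (a : ℝ) : (∫ z : ℝ, R a (U z)) = 1/2 - a := by
  have h := integral_of_hasDerivAt_of_tendsto (f := Gaux a)
    (fun z => hasDerivAt_Gaux a z) (integrable_RU a)
    (tendsto_Gaux_atBot a) (tendsto_Gaux_atTop a)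
  rw [h]; ring

lemma Haux_zero (a : ℝ) : Haux a 0 = a * Real.log 2 - Real.log 2 / 2 + 1/4 := by
  unfold Haux Gaux U
  norm_num
  ring

lemma integral_zRU (a : ℝ) :
    (∫ z in Set.Ioi (0:ℝ), z * R a (U z))
      = -(a * Real.log 2) + Real.log 2 / 2 - 1/4 := by
  have h := integral_Ioi_of_hasDerivAt_of_tendsto' (f := Haux a) (a := 0)
    (fun z _ => hasDerivAt_Haux a z) (integrableOn_zRU_Ioi a) (tendsto_Haux_atTop a)
  rw [h, Haux_zero]; ring

/-- For all real parameters `a` and all `w, θ ∈ ℝ`, the effective driving force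
`r_θ = √2·w·∫_ℝ R(U(z)) dz + 4θ·∫_0^{+∞} z·R(U(z)) dz` at the junction between a
waveguide of width `w` and a cone of half-angle `θ` equals
`w√2·(1/2 − a) + 2θ·( −1/2 − (2a−1)·log 2 )`. -/
theorem driving_force_cone (a w θ : ℝ) :
    Real.sqrt 2 * w * (∫ z : ℝ, R a (U z))
        + 4 * θ * ∫ z in Set.Ioi (0 : ℝ), z * R a (U z) =
      w * Real.sqrt 2 * (1 / 2 - a)
        + 2 * θ * (-(1 / 2) - (2 * a - 1) * Real.log 2) := by
  rw [integral_RU, integral_zRU]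
  ring
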